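/- Let ξ : ℝ₊^q → ℝ₊^p be superadditive with ξ(0)=0, V a nonnegative p×q matrix, and M(z) = sup_{r≥1} ξ(r·zV)/r. Then for all z ∈ ℝ₊^p, M(z) = lim_{r→∞} ξ(⌊r·zV⌋)/r = sup_{r ≥ 1} ξ(⌊r·zV⌋)/r, where ⌊·⌋ denotes componentwise floor. In particular M does not depend on the choice of superadditive extension of ξ from ℕ^q to ℝ₊^q. -/

import Mathlib

open scoped ENNReal
open Filter

/-- For superadditive `ξ` with `ξ 0 = 0` and nonnegative `V`, the function
`M(z) = sup_{r≥1} ξ(r·zV)/r` also equals `sup_{r≥1} ξ(⌊r·zV⌋)/r` and is the limit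
as `r → ∞` of `ξ(⌊r·zV⌋)/r`, where `⌊·⌋` is the componentwise floor. In particular
`M` only depends on the values of `ξ` at integer points. -/
theorem M_floor_characterization {p q : ℕ}
    (ξ : (Fin q → ℝ) → (Fin p → ℝ)) (V : Matrix (Fin p) (Fin q) ℝ)
    (hV : ∀ i j, 0 ≤ V i j)
    (hnn : ∀ x : Fin q → ℝ, 0 ≤ x → 0 ≤ ξ x)
    (hsuper : ∀ x y : Fin q → ℝ, 0 ≤ x → 0 ≤ y → ξ x + ξ y ≤ ξ (x + y))
    (h0 : ξ 0 = 0)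
    (M : (Fin p → ℝ) → Fin p → ℝ≥0∞)
    (hM : ∀ z : Fin p → ℝ, ∀ i,
      M z i = ⨆ r : {r : ℝ // 1 ≤ r},
        ENNReal.ofReal (ξ ((r : ℝ) • Matrix.vecMul z V) i / (r : ℝ))) :
    ∀ z : Fin p → ℝ, 0 ≤ z → ∀ i,
      (M z i = ⨆ r : {r : ℝ // 1 ≤ r},
          ENNReal.ofReal (ξ (fun j => (⌊(r : ℝ) * Matrix.vecMul z V j⌋ : ℝ)) i / (r : ℝ)))
      ∧ Tendsto
          (fun r : ℝ =>
            ENNReal.ofReal (ξ (fun j => (⌊r * Matrix.vecMul z V j⌋ : ℝ)) i / r))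
          atTop (nhds (M z i)) := by
  -- monotonicity of ξ
  have hmono : ∀ x y : Fin q → ℝ, 0 ≤ x → x ≤ y → ξ x ≤ ξ y := by
    intro x y hx hxy
    have hyx : (0 : Fin q → ℝ) ≤ y - x := fun j => sub_nonneg.2 (hxy j)
    calc ξ x ≤ ξ x + ξ (y - x) := le_add_of_nonneg_right (hnn _ hyx)
      _ ≤ ξ (x + (y - x)) := hsuper _ _ hx hyx
      _ = ξ y := by rw [add_sub_cancel]
  -- n-fold superadditivity
  have hnsmul : ∀ (n : ℕ) (x : Fin q → ℝ), 0 ≤ x → (n : ℝ) • ξ x ≤ ξ ((n : ℝ) • x) := by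
    intro n
    induction n with
    | zero => intro x hx; simp [h0]
    | succ n ih =>
      intro x hx
      have hxs : (0 : Fin q → ℝ) ≤ (n : ℝ) • x := by
        intro j; simpa using mul_nonneg n.cast_nonneg (hx j)
      calc ((n + 1 : ℕ) : ℝ) • ξ x = (n : ℝ) • ξ x + ξ x := by
            push_cast; rw [add_smul, one_smul]
        _ ≤ ξ ((n : ℝ) • x) + ξ x := add_le_add (ih x hx) le_rfl
        _ ≤ ξ ((n : ℝ) • x + x) := hsuper _ _ hxs hx
        _ = ξ (((n + 1 : ℕ) : ℝ) • x) := by push_cast; rw [add_smul, one_smul]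
  intro z hz i
  set w : Fin q → ℝ := Matrix.vecMul z V with hwdef
  have hw : ∀ j, 0 ≤ w j := by
    intro j
    simp only [hwdef, Matrix.vecMul, dotProduct]
    exact Finset.sum_nonneg fun k _ => mul_nonneg (hz k) (hV k j)
  -- the floor function G
  set G : ℝ → ℝ≥0∞ := fun r =>
    ENNReal.ofReal (ξ (fun j => (⌊r * w j⌋ : ℝ)) i / r) with hGdef
  set L1 : ℝ≥0∞ := ⨆ r : {r : ℝ // 1 ≤ r}, G (r : ℝ) with hL1def
  -- Claim 1 : L1 ≤ M z i
  have claim1 : L1 ≤ M z i := by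
    rw [hM]
    refine iSup_mono fun r => ?_
    have hr1 : (1 : ℝ) ≤ (r : ℝ) := r.2
    have hrpos : (0 : ℝ) < (r : ℝ) := lt_of_lt_of_le one_pos hr1
    refine ENNReal.ofReal_le_ofReal ?_
    have hfl0 : (0 : Fin q → ℝ) ≤ fun j => (⌊(r : ℝ) * w j⌋ : ℝ) := by
      intro j
      have h : (0 : ℤ) ≤ ⌊(r : ℝ) * w j⌋ :=
        Int.floor_nonneg.2 (mul_nonneg (le_of_lt hrpos) (hw j))
      show (0 : ℝ) ≤ (⌊(r : ℝ) * w j⌋ : ℝ)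
      exact_mod_cast h
    have hfle : (fun j => (⌊(r : ℝ) * w j⌋ : ℝ)) ≤ (r : ℝ) • w := by
      intro j
      simpa using Int.floor_le ((r : ℝ) * w j)
    have hle := hmono _ _ hfl0 hfle
    exact div_le_div_of_nonneg_right (hle i) hrpos.le
  -- Claim 2 : each F r0 ≤ liminf G
  have claim2 : ∀ r0 : {r : ℝ // 1 ≤ r},
      ENNReal.ofReal (ξ ((r0 : ℝ) • w) i / (r0 : ℝ)) ≤ liminf G atTop := by
    rintro ⟨r0, hr0⟩
    simp only
    have hr0pos : (0 : ℝ) < r0 := lt_of_lt_of_le one_pos hr0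
    have hwr0 : (0 : Fin q → ℝ) ≤ r0 • w := by
      intro j; simpa using mul_nonneg hr0pos.le (hw j)
    set A : ℝ := ξ (r0 • w) i with hAdef
    have hA : 0 ≤ A := hnn _ hwr0 i
    set c : ℝ := A / r0 with hcdef
    have hc : 0 ≤ c := div_nonneg hA hr0pos.le
    set s : ℝ := ∑ j : Fin q, if 0 < w j then (w j)⁻¹ else 0 with hsdef
    have hs : 0 ≤ s := Finset.sum_nonneg fun j _ => by
      by_cases h : 0 < w j <;> simp [h, inv_nonneg.2 (hw j)]
    have hsj : ∀ j, 0 < w j → 1 ≤ s * w j := by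
      intro j hwj
      have h1 : (w j)⁻¹ ≤ s := by
        rw [hsdef]
        refine Finset.single_le_sum (f := fun j => if 0 < w j then (w j)⁻¹ else 0)
          (fun k _ => by by_cases h : 0 < w k <;> simp [h, inv_nonneg.2 (hw k)])
          (Finset.mem_univ j) |>.trans_eq' ?_
        simp [hwj]
      calc (1 : ℝ) = (w j)⁻¹ * w j := (inv_mul_cancel₀ (ne_of_gt hwj)).symm
        _ ≤ s * w j := mul_le_mul_of_nonneg_right h1 (hw j)
    have hkey : ∀ r : ℝ, r0 + s ≤ r →
        c * (1 - (s + r0) / r) ≤ ξ (fun j => (⌊r * w j⌋ : ℝ)) i / r := by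
      intro r hr
      have hrpos : (0 : ℝ) < r := by linarith
      set n : ℕ := ⌊(r - s) / r0⌋₊ with hndef
      have hrs : (0 : ℝ) ≤ (r - s) / r0 := div_nonneg (by linarith) hr0pos.le
      have hn1 : (n : ℝ) ≤ (r - s) / r0 := Nat.floor_le hrs
      have hnr : (n : ℝ) * r0 ≤ r - s := (le_div_iff₀ hr0pos).1 hn1
      have hub : r - s < ((n : ℝ) + 1) * r0 :=
        (div_lt_iff₀ hr0pos).1 (Nat.lt_floor_add_one _)
      have hvec : ∀ j, ((n : ℝ) * r0) • w j ≤ (⌊r * w j⌋ : ℝ) := by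
        intro j
        rcases (hw j).lt_or_eq with hwj | hwj
        · have h1 : 1 ≤ s * w j := hsj j hwj
          have h2 : r * w j - 1 < (⌊r * w j⌋ : ℝ) := Int.sub_one_lt_floor _
          have h3 : (n : ℝ) * r0 * w j ≤ (r - s) * w j :=
            mul_le_mul_of_nonneg_right hnr (hw j)
          simp only [smul_eq_mul]
          nlinarith
        · simp [← hwj]
      have hsm0 : (0 : Fin q → ℝ) ≤ ((n : ℝ) * r0) • w := by
        intro j
        simpa using mul_nonneg (mul_nonneg n.cast_nonneg hr0pos.le) (hw j)
      have hfl0 : ((n : ℝ) * r0) • w ≤ fun j => (⌊r * w j⌋ : ℝ) := by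
        intro j; simpa using hvec j
      have hmle := hmono _ _ hsm0 hfl0
      have hsmul : (n : ℝ) * A ≤ ξ (((n : ℝ) * r0) • w) i := by
        have h4 := hnsmul n (r0 • w) hwr0
        have h5 := h4 i
        simp only [Pi.smul_apply, smul_eq_mul, smul_smul] at h5 ⊢
        exact h5
      have hB : (n : ℝ) * A ≤ ξ (fun j => (⌊r * w j⌋ : ℝ)) i :=
        hsmul.trans (hmle i)
      rw [le_div_iff₀ hrpos]
      have harith : c * (1 - (s + r0) / r) * r = A * ((r - s - r0) / r0) := by
        rw [hcdef]; field_simp; ring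
      rw [harith]
      have hq : (r - s - r0) / r0 ≤ (n : ℝ) := by
        rw [div_le_iff₀ hr0pos]; linarith
      calc A * ((r - s - r0) / r0) ≤ A * (n : ℝ) :=
            mul_le_mul_of_nonneg_left hq hA
        _ = (n : ℝ) * A := mul_comm _ _
        _ ≤ _ := hB
    have htend : Tendsto (fun r : ℝ => ENNReal.ofReal (c * (1 - (s + r0) / r)))
        atTop (nhds (ENNReal.ofReal c)) := by
      have h6 : Tendsto (fun r : ℝ => (s + r0) / r) atTop (nhds 0) :=
        tendsto_const_nhds.div_atTop tendsto_id
      have h5 : Tendsto (fun r : ℝ => c * (1 - (s + r0) / r)) atTop (nhds c) := by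
        have h7 : Tendsto (fun r : ℝ => 1 - (s + r0) / r) atTop (nhds 1) := by
          simpa using (tendsto_const_nhds (x := (1 : ℝ))).sub h6
        simpa using h7.const_mul c
      exact (ENNReal.continuous_ofReal.tendsto c).comp h5
    have hfin : ENNReal.ofReal c ≤ liminf G atTop := by
      rw [← htend.liminf_eq]
      refine liminf_le_liminf ?_
      filter_upwards [eventually_ge_atTop (r0 + s)] with r hr
      exact ENNReal.ofReal_le_ofReal (hkey r hr)
    exact hfin
  have hMle : M z i ≤ liminf G atTop := by
    rw [hM]
    exact iSup_le claim2
  have hlimsup : limsup G atTop ≤ L1 := by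
    refine limsup_le_of_le (by isBoundedDefault) ?_
    filter_upwards [eventually_ge_atTop (1 : ℝ)] with r hr
    exact le_iSup (fun s : {r : ℝ // 1 ≤ r} => G (s : ℝ)) ⟨r, hr⟩
  have hll : liminf G atTop ≤ limsup G atTop := liminf_le_limsup
  have heq : M z i = L1 :=
    le_antisymm (hMle.trans (hll.trans hlimsup)) claim1
  refine ⟨heq, ?_⟩
  have h1 : liminf G atTop = M z i :=
    le_antisymm (hll.trans (hlimsup.trans claim1)) hMle
  have h2 : limsup G atTop = M z i :=
    le_antisymm (hlimsup.trans claim1) (hMle.trans hll)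
  exact tendsto_of_liminf_eq_limsup h1 h2
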